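/- If μ is a continuous (atomless) Borel measure on ℝ^n (or more generally on a Riemannian manifold with its geodesic distance), finite on closed balls, whose support contains a nondegenerate geodesic segment, then there exists f ∈ L^1(μ) and a point z ∈ supp(μ) at which the non-centered maximal function strictly exceeds the centered one: M_μ f(z) > M^c_μ f(z). -/

import Mathlib

open MeasureTheory Metric ENNReal Filter

/-- A set is a (nondegenerate) closed ball. -/
def IsClosedBall {X : Type*} [MetricSpace X] (B : Set X) : Prop :=
  ∃ (c : X) (r : ℝ), 0 < r ∧ B = Metric.closedBall c r

/-- The support of a measure: points all of whose neighborhoods have positive measure. -/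
def suppM {X : Type*} [MetricSpace X] [MeasurableSpace X] (μ : Measure X) : Set X :=
  {x | ∀ r > (0 : ℝ), 0 < μ (Metric.ball x r)}

/-- Average of `f` over a set, declared `0` when the set is `μ`-null. -/
noncomputable def avg {X : Type*} [MetricSpace X] [MeasurableSpace X]
    (μ : Measure X) (f : X → ℝ≥0∞) (B : Set X) : ℝ≥0∞ :=
  if μ B = 0 then 0 else (∫⁻ y in B, f y ∂μ) / μ B

/-- Centered Hardy–Littlewood maximal function. -/
noncomputable def Mc {X : Type*} [MetricSpace X] [MeasurableSpace X]
    (μ : Measure X) (f : X → ℝ≥0∞) (x : X) : ℝ≥0∞ :=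
  ⨆ r > (0 : ℝ), avg μ f (Metric.closedBall x r)

/-- Non-centered Hardy–Littlewood maximal function. -/
noncomputable def Munc {X : Type*} [MetricSpace X] [MeasurableSpace X]
    (μ : Measure X) (f : X → ℝ≥0∞) (x : X) : ℝ≥0∞ :=
  ⨆ B ∈ {B : Set X | IsClosedBall B ∧ x ∈ B}, avg μ f B

/-- Ratio of measures with the convention `0` when the denominator vanishes. -/
noncomputable def ratio0 {X : Type*} [MeasurableSpace X] (μ ν : MeasureTheory.Measure X) (B : Set X) : ℝ≥0∞ :=
  if μ B = 0 then 0 else ν B / μ B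

/-- Centered maximal function of a measure `ν` with respect to `μ`. -/
noncomputable def McMeas {X : Type*} [MetricSpace X] [MeasurableSpace X]
    (μ ν : Measure X) (x : X) : ℝ≥0∞ :=
  ⨆ r > (0 : ℝ), ratio0 μ ν (Metric.closedBall x r)

/-- Non-centered maximal function of a measure `ν` with respect to `μ`. -/
noncomputable def MuncMeas {X : Type*} [MetricSpace X] [MeasurableSpace X]
    (μ ν : Measure X) (x : X) : ℝ≥0∞ :=
  ⨆ B ∈ {B : Set X | IsClosedBall B ∧ x ∈ B}, ratio0 μ ν B
/-- On Euclidean space, if an atomless measure's support contains a nondegenerate segment,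
the non-centered maximal function strictly exceeds the centered one for some `f ∈ L¹(μ)`
at some support point. -/
theorem uncentered_gt_centered_of_segment {n : ℕ}
    (μ : Measure (EuclideanSpace ℝ (Fin n)))
    (hfin : ∀ (c : EuclideanSpace ℝ (Fin n)) (r : ℝ), μ (closedBall c r) ≠ ∞)
    (hatomless : ∀ p : EuclideanSpace ℝ (Fin n), μ {p} = 0)
    (hseg : ∃ a b : EuclideanSpace ℝ (Fin n), a ≠ b ∧ segment ℝ a b ⊆ suppM μ) :
    ∃ f : EuclideanSpace ℝ (Fin n) → ℝ≥0∞, Measurable f ∧ (∫⁻ z, f z ∂μ) ≠ ∞ ∧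
      ∃ z ∈ suppM μ, Mc μ f z < Munc μ f z := by
  obtain ⟨a, b, hab, hsub⟩ := hseg
  set v := b - a with hv_def
  have hv : v ≠ 0 := sub_ne_zero.mpr (Ne.symm hab)
  set L : ℝ := ‖v‖ with hL_def
  have hL : 0 < L := norm_pos_iff.mpr hv
  set pt : ℝ → EuclideanSpace ℝ (Fin n) := fun s => a + s • v with hpt_def
  have hpt_sub : ∀ s u : ℝ, pt s - pt u = (s - u) • v := by
    intro s u
    simp only [hpt_def, add_sub_add_left_eq_sub, ← sub_smul]
  have hdist : ∀ s u : ℝ, dist (pt s) (pt u) = |s - u| * L := by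
    intro s u
    rw [dist_eq_norm, hpt_sub, norm_smul, Real.norm_eq_abs]
  have hmem : ∀ s : ℝ, 0 ≤ s → s ≤ 1 → pt s ∈ suppM μ := by
    intro s h0 h1
    apply hsub
    rw [segment_eq_image']
    exact ⟨s, ⟨h0, h1⟩, rfl⟩
  set p := pt 0 with hp_def
  set m := pt (1/4) with hm_def
  set z := pt (1/2) with hz_def
  set q := pt (3/4) with hq_def
  have hp_supp : p ∈ suppM μ := hmem 0 le_rfl (by norm_num)
  have hz_supp : z ∈ suppM μ := hmem (1/2) (by norm_num) (by norm_num)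
  have hq_supp : q ∈ suppM μ := hmem (3/4) (by norm_num) (by norm_num)
  have dpz : dist p z = L / 2 := by rw [hdist]; rw [show |((0:ℝ) - 1/2)| = 1/2 by norm_num]; ring
  have dpm : dist p m = L / 4 := by rw [hdist]; rw [show |((0:ℝ) - 1/4)| = 1/4 by norm_num]; ring
  have dzm : dist z m = L / 4 := by rw [hdist]; rw [show |((1:ℝ)/2 - 1/4)| = 1/4 by norm_num]; ring
  have dmz : dist m z = L / 4 := by rw [hdist]; rw [show |((1:ℝ)/4 - 1/2)| = 1/4 by norm_num]; ring
  have dqz : dist q z = L / 4 := by rw [hdist]; rw [show |((3:ℝ)/4 - 1/2)| = 1/4 by norm_num]; ring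
  have dqm : dist q m = L / 2 := by rw [hdist]; rw [show |((3:ℝ)/4 - 1/4)| = 1/2 by norm_num]; ring
  -- the sequence of shrinking parameters
  set δseq : ℕ → ℝ := fun k => (L/16) * (1 / (k+1)) with hδseq_def
  have hδpos : ∀ k, 0 < δseq k := by
    intro k
    exact _root_.mul_pos (by linarith) (by positivity)
  have hδle : ∀ k, δseq k ≤ L/16 := by
    intro k
    rw [hδseq_def]
    calc (L/16) * (1/(k+1)) ≤ (L/16) * 1 := by
          apply mul_le_mul_of_nonneg_left _ (by linarith)
          rw [div_le_one (by positivity)]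
          simp
      _ = L/16 := mul_one _
  have hδanti : ∀ j k : ℕ, j ≤ k → δseq k ≤ δseq j := by
    intro j k hjk
    apply mul_le_mul_of_nonneg_left _ (by linarith)
    have hjk' : (j:ℝ) + 1 ≤ (k:ℝ) + 1 := by
      have : (j:ℝ) ≤ k := Nat.cast_le.mpr hjk
      linarith
    exact one_div_le_one_div_of_le (by positivity) hjk'
  have hδtend : Tendsto δseq atTop (nhds 0) := by
    have h := tendsto_one_div_add_atTop_nhds_zero_nat.const_mul (L/16)
    rw [mul_zero] at h
    refine h.congr fun k => ?_
    simp [hδseq_def]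
  -- the shrinking lens sets
  set S : ℕ → Set (EuclideanSpace ℝ (Fin n)) :=
    fun k => closedBall m (L/4 + δseq k) \ closedBall z (L/2 - δseq k) with hS_def
  have hS_meas : ∀ k, MeasurableSet (S k) :=
    fun k => measurableSet_closedBall.diff measurableSet_closedBall
  have hS_anti : Antitone S := by
    intro j k hjk x hx
    obtain ⟨hx1, hx2⟩ := hx
    constructor
    · exact mem_closedBall.mpr (le_trans (mem_closedBall.mp hx1) (by linarith [hδanti j k hjk]))
    · intro hc
      exact hx2 (mem_closedBall.mpr (le_trans (mem_closedBall.mp hc) (by linarith [hδanti j k hjk])))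
  have hS_inter : ⋂ k, S k = {p} := by
    ext x
    simp only [Set.mem_iInter, Set.mem_singleton_iff, hS_def, Set.mem_diff, mem_closedBall,
      not_le]
    constructor
    · intro h
      have h1 : dist x m ≤ L/4 := by
        refine ge_of_tendsto' (x := atTop) (f := fun k => L/4 + δseq k) ?_ (fun k => (h k).1)
        have h' := hδtend.const_add (L/4)
        rwa [add_zero] at h'
      have h2 : L/2 ≤ dist x z := by
        refine le_of_tendsto' (x := atTop) (f := fun k => L/2 - δseq k) ?_ (fun k => ((h k).2).le)
        have h' := hδtend.const_sub (L/2)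
        rwa [sub_zero] at h'
      -- strict convexity argument
      set u := x - m with hu_def
      set w := m - z with hw_def
      have hw_norm : ‖w‖ = L/4 := by rw [hw_def, ← dist_eq_norm, dmz]
      have hu_norm_le : ‖u‖ ≤ L/4 := by rw [hu_def, ← dist_eq_norm]; exact h1
      have huw : u + w = x - z := by rw [hu_def, hw_def]; abel
      have hsum_ge : L/2 ≤ ‖u + w‖ := by rw [huw, ← dist_eq_norm]; exact h2
      have htri : ‖u + w‖ ≤ ‖u‖ + ‖w‖ := norm_add_le _ _
      have hu_norm : ‖u‖ = L/4 := by linarith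
      have hadd : ‖u + w‖ = ‖u‖ + ‖w‖ := by linarith
      have huweq : u = w := eq_of_norm_eq_of_norm_add_eq (by rw [hu_norm, hw_norm]) hadd
      have hpm : p - m = m - z := by
        rw [hp_def, hm_def, hz_def, hpt_sub, hpt_sub]
        norm_num
      have : x - m = p - m := by rw [hu_def] at huweq; rw [huweq, hpm]
      exact sub_left_injective this
    · rintro rfl k
      refine ⟨by rw [dpm]; linarith [hδpos k], by rw [dpz]; linarith [hδpos k]⟩
  -- positive mass near q
  set W : Set (EuclideanSpace ℝ (Fin n)) := ball q (L/16) with hW_def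
  have hW_pos : 0 < μ W := hq_supp (L/16) (by linarith)
  -- continuity from above to choose δ
  have htend : Tendsto (μ ∘ S) atTop (nhds (μ {p})) := by
    rw [← hS_inter]
    exact tendsto_measure_iInter_atTop (fun k => (hS_meas k).nullMeasurableSet) hS_anti
      ⟨0, by
        refine ne_top_of_le_ne_top (hfin m (L/4 + δseq 0)) (measure_mono ?_)
        exact Set.diff_subset⟩
  rw [hatomless p] at htend
  obtain ⟨k, hk⟩ := (htend.eventually_lt_const hW_pos).exists
  set δ := δseq k with hδ_def
  have hδ0 : 0 < δ := hδpos k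
  have hδ16 : δ ≤ L/16 := hδle k
  -- the key sets
  set D := closedBall p δ with hD_def
  set Bstar := closedBall m (L/4 + δ) with hBstar_def
  set Bz := closedBall z (L/2 - δ) with hBz_def
  have hD_pos : 0 < μ D := lt_of_lt_of_le (hp_supp δ hδ0) (measure_mono ball_subset_closedBall)
  have hD_fin : μ D ≠ ∞ := hfin p δ
  have hD_sub_Bstar : D ⊆ Bstar := by
    intro x hx
    rw [hBstar_def, mem_closedBall]
    calc dist x m ≤ dist x p + dist p m := dist_triangle _ _ _
      _ ≤ δ + L/4 := add_le_add (mem_closedBall.mp hx) (le_of_eq dpm)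
      _ = L/4 + δ := by ring
  have hBstar_pos : 0 < μ Bstar := lt_of_lt_of_le hD_pos (measure_mono hD_sub_Bstar)
  have hBz_pos : 0 < μ Bz :=
    lt_of_lt_of_le (hz_supp (L/2 - δ) (by linarith)) (measure_mono ball_subset_closedBall)
  have hBz_fin : μ Bz ≠ ∞ := hfin z (L/2 - δ)
  -- W sits inside Bz but misses Bstar
  have hW_sub_Bz : W ⊆ Bz := by
    intro x hx
    rw [hBz_def, mem_closedBall]
    calc dist x z ≤ dist x q + dist q z := dist_triangle _ _ _
      _ ≤ L/16 + L/4 := add_le_add (le_of_lt (mem_ball.mp hx)) (le_of_eq dqz)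
      _ ≤ L/2 - δ := by linarith
  have hW_disj_Bstar : W ∩ Bstar = ∅ := by
    rw [Set.eq_empty_iff_forall_notMem]
    rintro x ⟨hxW, hxB⟩
    have h1 : dist x q < L/16 := mem_ball.mp hxW
    have h2 : dist x m ≤ L/4 + δ := mem_closedBall.mp hxB
    have : dist q m ≤ dist q x + dist x m := dist_triangle _ _ _
    rw [dqm, dist_comm q x] at this
    linarith
  -- μ Bstar < μ Bz
  have hBstar_lt : μ Bstar < μ Bz := by
    have hsplit : μ (Bz \ W) + μ W = μ Bz := by
      rw [← measure_union disjoint_sdiff_self_left measurableSet_ball, Set.diff_union_self,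
        Set.union_eq_self_of_subset_right hW_sub_Bz]
    have hcover : μ Bstar ≤ μ (Bz \ W) + μ (S k) := by
      have : Bstar ⊆ (Bz \ W) ∪ S k := by
        intro x hx
        by_cases hxz : x ∈ Bz
        · left
          refine ⟨hxz, fun hxW => ?_⟩
          rw [Set.eq_empty_iff_forall_notMem] at hW_disj_Bstar
          exact hW_disj_Bstar x ⟨hxW, hx⟩
        · right
          exact ⟨hx, hxz⟩
      exact le_trans (measure_mono this) (measure_union_le _ _)
    have hdiff_fin : μ (Bz \ W) ≠ ∞ :=
      ne_top_of_le_ne_top hBz_fin (measure_mono Set.diff_subset)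
    calc μ Bstar ≤ μ (Bz \ W) + μ (S k) := hcover
      _ < μ (Bz \ W) + μ W := ENNReal.add_lt_add_left hdiff_fin hk
      _ = μ Bz := hsplit
  -- the function
  refine ⟨D.indicator (fun _ => (1 : ℝ≥0∞)), measurable_const.indicator measurableSet_closedBall,
    ?_, z, hz_supp, ?_⟩
  · rw [lintegral_indicator measurableSet_closedBall]
    simpa using hD_fin
  · have hint : ∀ B : Set (EuclideanSpace ℝ (Fin n)), MeasurableSet B →
        (∫⁻ y in B, D.indicator (fun _ => (1:ℝ≥0∞)) y ∂μ) = μ (D ∩ B) := by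
      intro B hB
      rw [lintegral_indicator measurableSet_closedBall, Measure.restrict_restrict
        measurableSet_closedBall]
      simp
      rfl
    have hMc : Mc μ (D.indicator (fun _ => (1:ℝ≥0∞))) z ≤ μ D / μ Bz := by
      rw [Mc]
      refine iSup₂_le fun r hr => ?_
      rcases lt_or_ge r (L/2 - δ) with hcase | hcase
      · have hempty : D ∩ closedBall z r = ∅ := by
          rw [Set.eq_empty_iff_forall_notMem]
          rintro x ⟨hxD, hxz⟩
          have h1 : dist x p ≤ δ := mem_closedBall.mp hxD
          have h2 : dist x z ≤ r := mem_closedBall.mp hxz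
          have : dist p z ≤ dist p x + dist x z := dist_triangle _ _ _
          rw [dpz, dist_comm p x] at this
          linarith
        rw [avg]
        split
        · exact zero_le
        · rw [hint _ measurableSet_closedBall, hempty, measure_empty, ENNReal.zero_div]
          exact zero_le
      · have hsubB : Bz ⊆ closedBall z r := closedBall_subset_closedBall hcase
        have hne : μ (closedBall z r) ≠ 0 := (lt_of_lt_of_le hBz_pos (measure_mono hsubB)).ne'
        rw [avg, if_neg hne, hint _ measurableSet_closedBall]
        exact ENNReal.div_le_div (measure_mono Set.inter_subset_left) (measure_mono hsubB)
    have hMunc : μ D / μ Bstar ≤ Munc μ (D.indicator (fun _ => (1:ℝ≥0∞))) z := by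
      have hball : Bstar ∈ {B : Set (EuclideanSpace ℝ (Fin n)) | IsClosedBall B ∧ z ∈ B} := by
        refine ⟨⟨m, L/4 + δ, by linarith, rfl⟩, ?_⟩
        rw [hBstar_def, mem_closedBall, dzm]
        linarith
      refine le_trans ?_ (le_biSup _ hball)
      rw [avg, if_neg hBstar_pos.ne', hint _ measurableSet_closedBall,
        Set.inter_eq_self_of_subset_left hD_sub_Bstar]
    refine lt_of_le_of_lt hMc (lt_of_lt_of_le ?_ hMunc)
    rw [div_eq_mul_inv, div_eq_mul_inv]
    exact ENNReal.mul_lt_mul_right hD_pos.ne' hD_fin (ENNReal.inv_lt_inv.mpr hBstar_lt)
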